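/- Traceability of unions: the union 𝔊₁ ∪ 𝔊₂ of two graph representations is traceable if and only if either 𝔊₁ has zero vertices and 𝔊₂ is traceable, or 𝔊₂ has zero vertices and 𝔊₁ is traceable. -/
import Mathlib


set_option autoImplicit false
set_option linter.unusedVariables false

namespace LawOrder

/-! ## Graph representations -/

structure Graph (B : Type) where
  n : ℕ
  label : ℕ → B
  edge : ℕ → ℕ → Prop
  edge_lt : ∀ i j, edge i j → i < n ∧ j < n

namespace Graph

variable {B : Type}

/-- The edge relation is acyclic. -/
def Acyclic (G : Graph B) : Prop := ∀ i, ¬ Relation.TransGen G.edge i i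

/-- The empty graph representation. -/
def zero (B : Type) [Inhabited B] : Graph B :=
  ⟨0, fun _ => default, fun _ _ => False, fun _ _ h => h.elim⟩

/-- Union of two graph representations: disjoint union, second part shifted. -/
def union (G₁ G₂ : Graph B) : Graph B where
  n := G₁.n + G₂.n
  label := fun i => if i < G₁.n then G₁.label i else G₂.label (i - G₁.n)
  edge := fun i j =>
    G₁.edge i j ∨ (G₁.n ≤ i ∧ G₁.n ≤ j ∧ G₂.edge (i - G₁.n) (j - G₁.n))
  edge_lt := by
    intro i j h
    rcases h with h | ⟨hi, hj, h⟩
    · have := G₁.edge_lt i j h; omega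
    · have := G₂.edge_lt _ _ h; omega

/-- Join of two graph representations: union plus all edges from the first
    part to the second part. -/
def join (G₁ G₂ : Graph B) : Graph B where
  n := G₁.n + G₂.n
  label := fun i => if i < G₁.n then G₁.label i else G₂.label (i - G₁.n)
  edge := fun i j =>
    G₁.edge i j ∨ (G₁.n ≤ i ∧ G₁.n ≤ j ∧ G₂.edge (i - G₁.n) (j - G₁.n)) ∨
      (i < G₁.n ∧ G₁.n ≤ j ∧ j < G₁.n + G₂.n)
  edge_lt := by
    intro i j h
    rcases h with h | ⟨hi, hj, h⟩ | ⟨hi, hj₁, hj₂⟩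
    · have := G₁.edge_lt i j h; omega
    · have := G₂.edge_lt _ _ h; omega
    · omega

/-- Isomorphism of graph representations. -/
def Iso (G₁ G₂ : Graph B) : Prop :=
  G₁.n = G₂.n ∧ ∃ f : Fin G₁.n → Fin G₁.n, Function.Bijective f ∧
    (∀ i j : Fin G₁.n, G₁.edge (f i).val (f j).val ↔ G₂.edge i.val j.val) ∧
    (∀ i : Fin G₁.n, G₁.label (f i).val = G₂.label i.val)

/-- `G₁` is a spanning graph representation of `G₂`: same vertices and labels,
    and the edges of `G₁` are contained in those of `G₂`. -/
def Spanning (G₁ G₂ : Graph B) : Prop :=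
  G₁.n = G₂.n ∧ (∀ i, i < G₁.n → G₁.label i = G₂.label i) ∧
    ∀ i j, G₁.edge i j → G₂.edge i j

/-- `f` is a topological ordering of `G`: `f` enumerates the vertices so that
    edges always point forward. -/
def IsTopOrder (G : Graph B) (f : Equiv.Perm (Fin G.n)) : Prop :=
  ∀ i j : Fin G.n, G.edge i.val j.val → f.symm i < f.symm j

/-- `G` has exactly one topological ordering. -/
def Traceable (G : Graph B) : Prop :=
  ∃! f : Equiv.Perm (Fin G.n), G.IsTopOrder f

/-- The identity enumeration is a topological ordering: all edges increase. -/
def TopOrdered (G : Graph B) : Prop := ∀ i j, G.edge i j → i < j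

/-- `k` is a union cut of `G`: no edge crosses from below `k` to `k` or above. -/
def UnionCut (G : Graph B) (k : ℕ) : Prop :=
  0 < k ∧ k < G.n ∧ ∀ i j, i < k → k ≤ j → ¬ G.edge i j

/-- `k` is a join cut of `G`: every pair crossing from below `k` to `k` or
    above (within range) is an edge. -/
def JoinCut (G : Graph B) (k : ℕ) : Prop :=
  0 < k ∧ k < G.n ∧ ∀ i j, i < k → k ≤ j → j < G.n → G.edge i j

/-- Lower part of the index cut at `k`. -/
def cutLo (G : Graph B) (k : ℕ) : Graph B where
  n := k
  label := G.label
  edge := fun i j => G.edge i j ∧ i < k ∧ j < k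
  edge_lt := fun i j h => ⟨h.2.1, h.2.2⟩

/-- Upper part of the index cut at `k` (re-indexed from 0). -/
def cutHi (G : Graph B) (k : ℕ) : Graph B where
  n := G.n - k
  label := fun i => G.label (i + k)
  edge := fun i j => G.edge (i + k) (j + k)
  edge_lt := by
    intro i j h
    have := G.edge_lt _ _ h
    omega

/-- Weak connectedness: any two vertices are joined by an undirected path. -/
def WeaklyConnected (G : Graph B) : Prop :=
  ∀ i j, i < G.n → j < G.n →
    Relation.ReflTransGen (fun a b => G.edge a b ∨ G.edge b a) i j

/-- Union of a nonempty sequence of graph representations. -/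
def unionList (G : Graph B) (L : List (Graph B)) : Graph B :=
  L.foldl union G

end Graph

/-! ## Contexts built from bindings with ordered and unordered composition -/

inductive GCtx (B : Type) where
  | empty : GCtx B
  | bind : B → GCtx B
  | comma : GCtx B → GCtx B → GCtx B
  | par : GCtx B → GCtx B → GCtx B

/-- Context patterns: contexts with a single hole. -/
inductive GPat (B : Type) where
  | hole : GPat B
  | commaL : GPat B → GCtx B → GPat B
  | commaR : GCtx B → GPat B → GPat B
  | parL : GPat B → GCtx B → GPat B
  | parR : GCtx B → GPat B → GPat B

def GPat.fill {B : Type} : GPat B → GCtx B → GCtx B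
  | .hole, Γ => Γ
  | .commaL G Δ, Γ => .comma (G.fill Γ) Δ
  | .commaR Δ G, Γ => .comma Δ (G.fill Γ)
  | .parL G Δ, Γ => .par (G.fill Γ) Δ
  | .parR Δ G, Γ => .par Δ (G.fill Γ)

def GCtx.toList {B : Type} : GCtx B → List B
  | .empty => []
  | .bind b => [b]
  | .comma Γ₁ Γ₂ => Γ₁.toList ++ Γ₂.toList
  | .par Γ₁ Γ₂ => Γ₁.toList ++ Γ₂.toList

/-- Graph part of the interpretation of a context: unrestricted bindings
    contribute no vertex, ordered bindings one vertex; `comma` is join,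
    `par` is union. -/
def GCtx.interpG {B : Type} [Inhabited B] (unr : B → Bool) : GCtx B → Graph B
  | .empty => Graph.zero B
  | .bind b =>
      if unr b then Graph.zero B
      else ⟨1, fun _ => b, fun _ _ => False, fun _ _ h => h.elim⟩
  | .comma Γ₁ Γ₂ => (interpG unr Γ₁).join (interpG unr Γ₂)
  | .par Γ₁ Γ₂ => (interpG unr Γ₁).union (interpG unr Γ₂)

/-- Set part of the interpretation of a context: the set of its
    unrestricted bindings. -/
def GCtx.unrSet {B : Type} (unr : B → Bool) : GCtx B → Set B
  | .empty => ∅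
  | .bind b => if unr b then {b} else ∅
  | .comma Γ₁ Γ₂ => unrSet unr Γ₁ ∪ unrSet unr Γ₂
  | .par Γ₁ Γ₂ => unrSet unr Γ₁ ∪ unrSet unr Γ₂

/-- Traceability only depends on the vertex count and edge relation. -/
lemma traceable_congr_aux {B : Type} {G H : Graph B} (hn : G.n = H.n)
    (he : ∀ i j, G.edge i j ↔ H.edge i j) : (G.Traceable ↔ H.Traceable) := by
  obtain ⟨n, l, e, h⟩ := G
  obtain ⟨n', l', e', h'⟩ := H
  obtain rfl : n = n' := hn
  have key : ∀ f, Graph.IsTopOrder ⟨n, l, e, h⟩ f ↔ Graph.IsTopOrder ⟨n, l', e', h'⟩ f :=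
    fun f => ⟨fun hf i j hij => hf i j ((he _ _).mpr hij),
              fun hf i j hij => hf i j ((he _ _).mp hij)⟩
  exact existsUnique_congr key

/-- If both parts are nonempty and edges never cross the cut at `n₁`, any
topological ordering can be perturbed to another one. -/
lemma two_toporders_aux {n₁ n₂ : ℕ} (E : ℕ → ℕ → Prop)
    (hE : ∀ i j, E i j → (i < n₁ ∧ j < n₁) ∨ (n₁ ≤ i ∧ n₁ ≤ j))
    (h₁ : n₁ ≠ 0) (h₂ : n₂ ≠ 0) (f : Equiv.Perm (Fin (n₁ + n₂)))
    (hf : ∀ i j : Fin (n₁ + n₂), E i.val j.val → f.symm i < f.symm j) :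
    ∃ g : Equiv.Perm (Fin (n₁ + n₂)),
      (∀ i j : Fin (n₁ + n₂), E i.val j.val → g.symm i < g.symm j) ∧ g ≠ f := by
  have hN : n₁ < n₁ + n₂ := by omega
  have h0N : 0 < n₁ + n₂ := by omega
  -- positions of vertex 0 (in part 1) and vertex n₁ (in part 2)
  have hp : (f (f.symm ⟨0, h0N⟩)).val < n₁ := by
    rw [Equiv.apply_symm_apply]; show 0 < n₁; omega
  have hq : ¬ (f (f.symm ⟨n₁, hN⟩)).val < n₁ := by
    rw [Equiv.apply_symm_apply]; show ¬ n₁ < n₁; omega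
  have hstep : ∃ k, ∃ hk : k + 1 < n₁ + n₂,
      ¬ ((f ⟨k, by omega⟩).val < n₁ ↔ (f ⟨k + 1, hk⟩).val < n₁) := by
    by_contra hc
    push_neg at hc
    have const : ∀ m, ∀ hm : m < n₁ + n₂,
        ((f ⟨m, hm⟩).val < n₁ ↔ (f ⟨0, h0N⟩).val < n₁) := by
      intro m
      induction m with
      | zero => intro _; rfl
      | succ m ih =>
        intro hm
        exact ((hc m hm).symm.trans (ih (by omega)))
    have e1 := const (f.symm ⟨0, h0N⟩).val (f.symm ⟨0, h0N⟩).isLt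
    have e2 := const (f.symm ⟨n₁, hN⟩).val (f.symm ⟨n₁, hN⟩).isLt
    simp only [Fin.eta] at e1 e2
    rw [e1] at hp
    rw [e2] at hq
    exact hq hp
  obtain ⟨k, hk1, hkne⟩ := hstep
  have hkN : k < n₁ + n₂ := by omega
  set k₀ : Fin (n₁ + n₂) := ⟨k, hkN⟩ with hk₀
  set k₁ : Fin (n₁ + n₂) := ⟨k + 1, hk1⟩ with hk₁
  have hdiff : ((f k₀).val < n₁) ↔ ¬ ((f k₁).val < n₁) := by
    constructor
    · intro hA hB; exact hkne ⟨fun _ => hB, fun _ => hA⟩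
    · intro hB
      by_contra hA
      exact hkne ⟨fun h => absurd h hA, fun h => absurd h hB⟩
  refine ⟨(Equiv.swap k₀ k₁).trans f, ?_, ?_⟩
  · intro i j hij
    have hab : f.symm i < f.symm j := hf i j hij
    have hsymm : ∀ x, ((Equiv.swap k₀ k₁).trans f).symm x = Equiv.swap k₀ k₁ (f.symm x) := by
      intro x
      rw [Equiv.symm_trans_apply, Equiv.symm_swap]
    rw [hsymm, hsymm]
    by_cases ha0 : f.symm i = k₀
    · rw [ha0, Equiv.swap_apply_left]
      by_cases hb1 : f.symm j = k₁
      · -- bad case: i = f k₀, j = f k₁ lie in different parts, so no edge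
        exfalso
        have hi : i = f k₀ := by rw [← ha0, Equiv.apply_symm_apply]
        have hj : j = f k₁ := by rw [← hb1, Equiv.apply_symm_apply]
        rcases hE _ _ hij with ⟨hi', hj'⟩ | ⟨hi', hj'⟩
        · rw [hi] at hi'; rw [hj] at hj'
          exact hdiff.mp hi' hj'
        · rw [hi] at hi'; rw [hj] at hj'
          have := hdiff.mpr (by omega)
          omega
      · have hb0 : f.symm j ≠ k₀ := by
          rintro h; rw [h, ← ha0] at hab; exact absurd hab (lt_irrefl _)
        rw [Equiv.swap_apply_of_ne_of_ne hb0 hb1]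
        have h1 : k < (f.symm j).val := by
          have := hab; rw [ha0] at this; exact this
        have h2 : (f.symm j).val ≠ k + 1 := fun h => hb1 (Fin.ext h)
        exact show (k : ℕ) + 1 < (f.symm j).val by omega
    · by_cases ha1 : f.symm i = k₁
      · rw [ha1, Equiv.swap_apply_right]
        have h1 : k + 1 < (f.symm j).val := by
          have := hab; rw [ha1] at this; exact this
        have hb0 : f.symm j ≠ k₀ := fun h => by
          have := congrArg Fin.val h; simp only [hk₀] at this; omega
        have hb1 : f.symm j ≠ k₁ := fun h => by
          have := congrArg Fin.val h; simp only [hk₁] at this; omega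
        rw [Equiv.swap_apply_of_ne_of_ne hb0 hb1]
        exact show (k : ℕ) < (f.symm j).val by omega
      · rw [Equiv.swap_apply_of_ne_of_ne ha0 ha1]
        have ha0' : (f.symm i).val ≠ k := fun h => ha0 (Fin.ext h)
        have ha1' : (f.symm i).val ≠ k + 1 := fun h => ha1 (Fin.ext h)
        by_cases hb0 : f.symm j = k₀
        · rw [hb0, Equiv.swap_apply_left]
          have h1 : (f.symm i).val < k := by
            have := hab; rw [hb0] at this
            have h2 : (f.symm i).val < k := this
            omega
          exact show (f.symm i).val < k + 1 by omega
        · by_cases hb1 : f.symm j = k₁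
          · rw [hb1, Equiv.swap_apply_right]
            have h1 : (f.symm i).val < k + 1 := by
              have := hab; rw [hb1] at this; exact this
            exact show (f.symm i).val < k by omega
          · rw [Equiv.swap_apply_of_ne_of_ne hb0 hb1]
            exact hab
  · intro h
    have h1 : ((Equiv.swap k₀ k₁).trans f) k₀ = f k₁ := by
      simp [Equiv.trans_apply, Equiv.swap_apply_left]
    rw [h] at h1
    have h2 := f.injective h1
    have := congrArg Fin.val h2
    simp only [hk₀, hk₁] at this
    omega

lemma not_traceable_union_aux {B : Type} (G₁ G₂ : Graph B)
    (h₁ : G₁.n ≠ 0) (h₂ : G₂.n ≠ 0) : ¬ (G₁.union G₂).Traceable := by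
  rintro ⟨f, hf, hu⟩
  have hE : ∀ i j, (G₁.union G₂).edge i j →
      (i < G₁.n ∧ j < G₁.n) ∨ (G₁.n ≤ i ∧ G₁.n ≤ j) := by
    intro i j h
    rcases h with h | ⟨hi, hj, h⟩
    · left; exact G₁.edge_lt _ _ h
    · right; exact ⟨hi, hj⟩
  obtain ⟨g, hg, hgne⟩ := two_toporders_aux (G₁.union G₂).edge hE h₁ h₂ f hf
  exact hgne (hu g hg)

/-- **Traceability of unions.** The union `𝔊₁ ∪ 𝔊₂` is traceable iff either
`𝔊₁` has no vertices and `𝔊₂` is traceable, or `𝔊₂` has no vertices and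
`𝔊₁` is traceable. -/
theorem union_traceable {B : Type} (G₁ G₂ : Graph B)
    (hac₁ : G₁.Acyclic) (hac₂ : G₂.Acyclic) :
    (G₁.union G₂).Traceable ↔
      ((G₁.n = 0 ∧ G₂.Traceable) ∨ (G₂.n = 0 ∧ G₁.Traceable)) := by
  constructor
  · intro ht
    by_cases h₁ : G₁.n = 0
    · left
      refine ⟨h₁, ?_⟩
      have hcong : (G₁.union G₂).Traceable ↔ G₂.Traceable := by
        apply traceable_congr_aux
        · show G₁.n + G₂.n = G₂.n; omega
        · intro i j
          show (G₁.edge i j ∨ _) ↔ _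
          constructor
          · rintro (h | ⟨hi, hj, h⟩)
            · have := G₁.edge_lt _ _ h; omega
            · simpa [h₁] using h
          · intro h
            right
            refine ⟨by omega, by omega, ?_⟩
            simpa [h₁] using h
      exact hcong.mp ht
    · by_cases h₂ : G₂.n = 0
      · right
        refine ⟨h₂, ?_⟩
        have hcong : (G₁.union G₂).Traceable ↔ G₁.Traceable := by
          apply traceable_congr_aux
          · show G₁.n + G₂.n = G₁.n; omega
          · intro i j
            show (G₁.edge i j ∨ _) ↔ _
            constructor
            · rintro (h | ⟨hi, hj, h⟩)
              · exact h
              · have := G₂.edge_lt _ _ h; omega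
            · intro h; exact Or.inl h
        exact hcong.mp ht
      · exact absurd ht (not_traceable_union_aux G₁ G₂ h₁ h₂)
  · rintro (⟨h₁, ht⟩ | ⟨h₂, ht⟩)
    · have hcong : (G₁.union G₂).Traceable ↔ G₂.Traceable := by
        apply traceable_congr_aux
        · show G₁.n + G₂.n = G₂.n; omega
        · intro i j
          show (G₁.edge i j ∨ _) ↔ _
          constructor
          · rintro (h | ⟨hi, hj, h⟩)
            · have := G₁.edge_lt _ _ h; omega
            · simpa [h₁] using h
          · intro h
            right
            refine ⟨by omega, by omega, ?_⟩
            simpa [h₁] using h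
      exact hcong.mpr ht
    · have hcong : (G₁.union G₂).Traceable ↔ G₁.Traceable := by
        apply traceable_congr_aux
        · show G₁.n + G₂.n = G₁.n; omega
        · intro i j
          show (G₁.edge i j ∨ _) ↔ _
          constructor
          · rintro (h | ⟨hi, hj, h⟩)
            · exact h
            · have := G₂.edge_lt _ _ h; omega
          · intro h; exact Or.inl h
      exact hcong.mpr ht

end LawOrder
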